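/- Every countably generated free filter on ℕ is block-respecting: for every F-stationary set H and every partition {D_k : k ∈ ℕ} of H into finite sets, there exists an F-stationary set J ⊆ H such that |J ∩ D_k| ≤ 1 for every k. -/
import Mathlib


/-- A filter on ℕ, as a family of subsets: nonempty (contains `univ`), not containing `∅`,
closed under finite intersections and supersets. -/
def IsSetFilter (F : Set (Set ℕ)) : Prop :=
  Set.univ ∈ F ∧ ∅ ∉ F ∧ (∀ A ∈ F, ∀ B ∈ F, A ∩ B ∈ F) ∧ ∀ A ∈ F, ∀ B : Set ℕ, A ⊆ B → B ∈ F

/-- A filter is free if its dual ideal contains all finite sets, i.e. the complement of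
every finite set belongs to the filter. -/
def IsFreeSetFilter (F : Set (Set ℕ)) : Prop :=
  IsSetFilter F ∧ ∀ S : Set ℕ, S.Finite → Sᶜ ∈ F

/-- `H` is `F`-stationary iff it does not belong to the dual ideal of `F`,
i.e. `Hᶜ ∉ F`. -/
def FStationary (F : Set (Set ℕ)) (H : Set ℕ) : Prop := Hᶜ ∉ F

/-- The dual ideal of `F` is countably generated by the partition `A` of ℕ into
pairwise disjoint nonempty sets: it consists exactly of the finite unions of subsets
of the sets `A k`. -/
def CountablyGeneratedBy (F : Set (Set ℕ)) (A : ℕ → Set ℕ) : Prop :=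
  (∀ k, (A k).Nonempty) ∧ Pairwise (Function.onFun Disjoint A) ∧ (⋃ k, A k) = Set.univ ∧
    ∀ S : Set ℕ, Sᶜ ∈ F ↔ ∃ T : Finset ℕ, ∃ B : ℕ → Set ℕ,
      (∀ k ∈ T, B k ⊆ A k) ∧ S = ⋃ k ∈ T, B k

/-- `F` is super-diagonal: every stationary set has a stationary subset all of whose
infinite subsets are stationary. -/
def SuperDiagonal (F : Set (Set ℕ)) : Prop :=
  ∀ I : Set ℕ, FStationary F I →
    ∃ J ⊆ I, FStationary F J ∧ ∀ K ⊆ J, K.Infinite → FStationary F K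

/-- `F` is diagonal: for every sequence `(A n)` of members of `F` and every stationary
set `I` there exists a stationary `J ⊆ I` with `J \ A n` finite for all `n`. -/
def DiagonalFilter (F : Set (Set ℕ)) : Prop :=
  ∀ A : ℕ → Set ℕ, (∀ n, A n ∈ F) → ∀ I : Set ℕ, FStationary F I →
    ∃ J ⊆ I, FStationary F J ∧ ∀ n, (J \ A n).Finite

/-- `F` is block-respecting: for every stationary set `H` and every partition `(D k)`
of `H` into finite sets, there is a stationary `J ⊆ H` with `|J ∩ D k| ≤ 1` for all `k`. -/
def BlockRespecting (F : Set (Set ℕ)) : Prop :=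
  ∀ H : Set ℕ, FStationary F H → ∀ D : ℕ → Set ℕ, (∀ k, (D k).Finite) →
    Pairwise (Function.onFun Disjoint D) → (⋃ k, D k) = H →
    ∃ J ⊆ H, FStationary F J ∧ ∀ k, (J ∩ D k).Subsingleton

/-- every countably generated free filter on ℕ is block-respecting. -/
theorem stmt2 (F : Set (Set ℕ)) (A : ℕ → Set ℕ)
    (hF : IsFreeSetFilter F) (hgen : CountablyGeneratedBy F A) :
    BlockRespecting F := by
  obtain ⟨hA0, hAdisj, hAcov, hiff⟩ := hgen
  intro H hH D hDfin hDdisj hDcov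
  -- index of the A-block containing a point
  have hmemA : ∀ x : ℕ, ∃ k, x ∈ A k := by
    intro x
    have : x ∈ ⋃ k, A k := by rw [hAcov]; trivial
    exact Set.mem_iUnion.1 this
  choose idxA hidxA using hmemA
  have hidxA_eq : ∀ x k, x ∈ A k → idxA x = k := by
    intro x k hx
    by_contra hne
    exact Set.disjoint_left.1 (hAdisj hne) (hidxA x) hx
  -- index of the D-block containing a point of H
  have hmemD : ∀ x : ℕ, ∃ k, x ∈ H → x ∈ D k := by
    intro x
    by_cases hx : x ∈ H
    · have : x ∈ ⋃ k, D k := by rw [hDcov]; exact hx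
      obtain ⟨k, hk⟩ := Set.mem_iUnion.1 this
      exact ⟨k, fun _ => hk⟩
    · exact ⟨0, fun h => absurd h hx⟩
  choose idxD hidxD using hmemD
  -- dual ideal membership iff the set of touched A-indices is finite
  have hdual : ∀ S : Set ℕ, Sᶜ ∈ F ↔ (idxA '' S).Finite := by
    intro S
    rw [hiff S]
    constructor
    · rintro ⟨T, B, hB, rfl⟩
      apply Set.Finite.subset T.finite_toSet
      rintro k ⟨x, hx, rfl⟩
      simp only [Set.mem_iUnion] at hx
      obtain ⟨j, hjT, hxB⟩ := hx
      have hxA : x ∈ A j := hB j hjT hxB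
      rw [hidxA_eq x j hxA]
      exact hjT
    · intro hfin
      refine ⟨hfin.toFinset, fun k => S ∩ A k, fun k _ => Set.inter_subset_right, ?_⟩
      ext x
      simp only [Set.mem_iUnion]
      constructor
      · intro hx
        exact ⟨idxA x, by simp only [Set.Finite.mem_toFinset]; exact ⟨x, hx, rfl⟩, hx, hidxA x⟩
      · rintro ⟨k, _, hx, _⟩; exact hx
  have hHinf : (idxA '' H).Infinite := fun hf => hH ((hdual H).2 hf)
  -- key step: given finitely many forbidden points, find a point of H in a fresh
  -- A-block and a fresh D-block
  have key : ∀ Q : Finset ℕ, ∃ x, x ∈ H ∧ ∀ p ∈ Q, idxD x ≠ idxD p ∧ idxA x ≠ idxA p := by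
    intro Q
    set RD : Set ℕ := ⋃ p ∈ Q, D (idxD p) with hRD
    have hRDfin : RD.Finite := Set.Finite.biUnion Q.finite_toSet (fun p _ => hDfin _)
    have hbadfin : ((↑(Q.image idxA) : Set ℕ) ∪ idxA '' RD).Finite :=
      (Q.image idxA).finite_toSet.union (hRDfin.image _)
    obtain ⟨k, hkmem, hkbad⟩ := (hHinf.diff hbadfin).nonempty
    obtain ⟨y, hyH, hyk⟩ := hkmem
    refine ⟨y, hyH, fun p hp => ⟨?_, ?_⟩⟩
    · intro heq
      have hyD : y ∈ D (idxD y) := hidxD y hyH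
      have hymem : y ∈ RD := Set.mem_biUnion hp (heq ▸ hyD)
      exact hkbad (Or.inr ⟨y, hymem, hyk⟩)
    · intro heq
      refine hkbad (Or.inl ?_)
      simp only [Finset.coe_image, Set.mem_image, Finset.mem_coe]
      exact ⟨p, hp, heq.symm.trans hyk⟩
  choose pick hpickH hpick using key
  set P : ℕ → Finset ℕ := fun n => Nat.rec ∅ (fun _ Qn => insert (pick Qn) Qn) n with hP
  have hPsucc : ∀ n, P (n + 1) = insert (pick (P n)) (P n) := fun n => rfl
  have hPmono : ∀ n m, n ≤ m → P n ⊆ P m := by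
    intro n m h
    induction h with
    | refl => exact Finset.Subset.refl _
    | step h ih => exact ih.trans (by rw [hPsucc]; exact Finset.subset_insert _ _)
  have hxmem : ∀ n m, n < m → pick (P n) ∈ P m := by
    intro n m h
    apply hPmono (n + 1) m h
    rw [hPsucc]
    exact Finset.mem_insert_self _ _
  refine ⟨Set.range (fun n => pick (P n)), ?_, ?_, ?_⟩
  · rintro _ ⟨n, rfl⟩
    exact hpickH (P n)
  · intro hcF
    have hfin := (hdual _).1 hcF
    have hinj : Function.Injective (fun n => idxA (pick (P n))) := by
      intro n m heq
      by_contra hne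
      rcases Nat.lt_or_ge n m with h | h
      · exact (hpick (P m) (pick (P n)) (hxmem n m h)).2 heq.symm
      · have h' : m < n := lt_of_le_of_ne h (fun e => hne e.symm)
        exact (hpick (P n) (pick (P m)) (hxmem m n h')).2 heq
    have : (idxA '' Set.range fun n => pick (P n)).Infinite :=
      Set.infinite_of_injective_forall_mem (f := fun n => idxA (pick (P n))) hinj
        (fun n => ⟨pick (P n), ⟨n, rfl⟩, rfl⟩)
    exact this hfin
  · intro k
    rintro a ⟨⟨n, rfl⟩, haD⟩ b ⟨⟨m, rfl⟩, hbD⟩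
    have hidx : ∀ j, pick (P j) ∈ D k → idxD (pick (P j)) = k := by
      intro j hj
      by_contra hne
      exact Set.disjoint_left.1 (hDdisj hne) (hidxD _ (hpickH (P j))) hj
    have hn := hidx n haD
    have hm := hidx m hbD
    rcases Nat.lt_trichotomy n m with h | h | h
    · exact absurd (hm.trans hn.symm) (hpick (P m) (pick (P n)) (hxmem n m h)).1
    · rw [h]
    · exact absurd (hn.trans hm.symm) (hpick (P n) (pick (P m)) (hxmem m n h)).1
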